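/- The function q(x) satisfies 0 ≤ min{x-ℓ, u-x} - q(x) ≤ ω/4 for all x ∈ [ℓ, u]; that is, q is a uniform approximation of min{x-ℓ, u-x} with error at most ω/4. -/
import Mathlib


theorem stmt2 (ℓ u ω : ℝ) (hlu : ℓ < u) (hω : 0 < ω) (hωu : ω < u - ℓ)
    (q : ℝ → ℝ)
    (hq : ∀ x, q x = if |u + ℓ - 2*x| ≤ ω
        then (u - ℓ)/2 - ω/4 - (2*x - u - ℓ)^2/(4*ω)
        else min (x - ℓ) (u - x)) :
    ∀ x ∈ Set.Icc ℓ u,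
      0 ≤ min (x - ℓ) (u - x) - q x ∧ min (x - ℓ) (u - x) - q x ≤ ω/4 := by
  intro x hx
  rw [hq]
  split_ifs with h
  · obtain ⟨h1, h2⟩ := abs_le.mp h
    rcases le_total (x - ℓ) (u - x) with h3 | h3
    · rw [min_eq_left h3]
      have key : (x - ℓ) - ((u - ℓ)/2 - ω/4 - (2*x - u - ℓ)^2/(4*ω))
          = ((2*x - u - ℓ) + ω)^2 / (4*ω) := by field_simp; ring
      rw [key]
      constructor
      · positivity
      · rw [div_le_div_iff₀ (by positivity) (by norm_num : (0:ℝ) < 4)]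
        nlinarith
    · rw [min_eq_right h3]
      have key : (u - x) - ((u - ℓ)/2 - ω/4 - (2*x - u - ℓ)^2/(4*ω))
          = ((2*x - u - ℓ) - ω)^2 / (4*ω) := by field_simp; ring
      rw [key]
      constructor
      · positivity
      · rw [div_le_div_iff₀ (by positivity) (by norm_num : (0:ℝ) < 4)]
        nlinarith
  · refine ⟨by simp, by simp; positivity⟩
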